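/- Let V be a complex vector space, B : V × V → ℂ a hermitian positive semidefinite sesquilinear form, and T : V → V a linear map that is B-symmetric (B(Tx,y) = B(x,Ty) for all x,y), satisfies B(x, Tx) ≥ 0 for all x, and is a B-contraction (B(Tx,Tx) ≤ B(x,x) for all x). Then the induced operator T̂ on the quotient inner product space V/N, where N = {x : B(x,x) = 0}, is well defined, symmetric for the quotient inner product, positive (⟨u, T̂ u⟩ ≥ 0 for all u ∈ V/N), and a contraction (‖T̂ u‖ ≤ ‖u‖ for all u ∈ V/N). -/

import Mathlib

open ComplexOrder

private lemma os_key_null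
    {V : Type*} [AddCommGroup V] [Module ℂ V]
    (B : V →ₗ⋆[ℂ] V →ₗ[ℂ] ℂ)
    (hherm : ∀ x y : V, B y x = (starRingEnd ℂ) (B x y))
    (hpos : ∀ x : V, 0 ≤ B x x)
    {x : V} (hx : B x x = 0) : ∀ y : V, B y x = 0 := by
  letI core : PreInnerProductSpace.Core ℂ V :=
    { inner := fun a b => B a b
      conj_inner_symm := fun a b => (hherm b a).symm
      re_inner_nonneg := fun a => by
        have := hpos a
        rw [Complex.le_def] at this
        simpa using this.1
      add_left := fun a b c => by simp
      smul_left := fun a b r => by simp }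
  letI : Inner ℂ V := core.toInner
  intro y
  have hcs := @InnerProductSpace.Core.inner_mul_inner_self_le ℂ V _ _ _ core x y
  have h1 : (inner ℂ x y : ℂ) = B x y := rfl
  have h2 : (inner ℂ y x : ℂ) = B y x := rfl
  have h3 : (inner ℂ x x : ℂ) = B x x := rfl
  rw [h1, h2, h3, hx] at hcs
  simp only [map_zero, Complex.zero_re, zero_mul] at hcs
  have hne : ‖B y x‖ = ‖B x y‖ := by rw [hherm]; simp
  rw [hne] at hcs
  have : ‖B x y‖ * ‖B x y‖ ≤ 0 := hcs
  have hz : ‖B x y‖ = 0 := by nlinarith [norm_nonneg (B x y)]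
  rw [hherm]
  simp [norm_eq_zero.mp hz]

theorem os_quantization_transfer_matrix
    (V : Type*) [AddCommGroup V] [Module ℂ V]
    (B : V →ₗ⋆[ℂ] V →ₗ[ℂ] ℂ)
    (hherm : ∀ x y : V, B y x = (starRingEnd ℂ) (B x y))
    (hpos : ∀ x : V, 0 ≤ B x x)
    (T : V →ₗ[ℂ] V)
    (hsym : ∀ x y : V, B (T x) y = B x (T y))
    (hTpos : ∀ x : V, 0 ≤ B x (T x))
    (hcontr : ∀ x : V, B (T x) (T x) ≤ B x x) :
    ∃ N : Submodule ℂ V, (N : Set V) = {x : V | B x x = 0} ∧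
      ∃ B' : (V ⧸ N) →ₗ⋆[ℂ] (V ⧸ N) →ₗ[ℂ] ℂ,
        (∀ x y : V, B' (Submodule.Quotient.mk x) (Submodule.Quotient.mk y) = B x y) ∧
        (∀ u v : V ⧸ N, B' v u = (starRingEnd ℂ) (B' u v)) ∧
        (∀ u : V ⧸ N, 0 ≤ B' u u) ∧
        (∀ u : V ⧸ N, B' u u = 0 → u = 0) ∧
        ∃ T' : (V ⧸ N) →ₗ[ℂ] (V ⧸ N),
          (∀ x : V, T' (Submodule.Quotient.mk x) = Submodule.Quotient.mk (T x)) ∧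
          (∀ u v : V ⧸ N, B' (T' u) v = B' u (T' v)) ∧
          (∀ u : V ⧸ N, 0 ≤ B' u (T' u)) ∧
          (∀ u : V ⧸ N, B' (T' u) (T' u) ≤ B' u u) := by
  classical
  set N : Submodule ℂ V :=
    { carrier := {x : V | ∀ y : V, B y x = 0}
      add_mem' := fun {a b} ha hb y => by simp [ha y, hb y]
      zero_mem' := fun y => by simp
      smul_mem' := fun c a ha y => by simp [ha y] } with hNdef
  have memN : ∀ x : V, x ∈ N ↔ ∀ y : V, B y x = 0 := fun x => Iff.rfl
  have memN' : ∀ x : V, x ∈ N ↔ B x x = 0 := by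
    intro x
    constructor
    · intro h; exact h x
    · intro h; exact os_key_null B hherm hpos h
  refine ⟨N, ?_, ?_⟩
  · ext x; simpa using memN' x
  -- descend B
  have hker : ∀ x : V, N ≤ LinearMap.ker (B x) := by
    intro x y hy
    exact hy x
  set f : V →ₗ⋆[ℂ] ((V ⧸ N) →ₗ[ℂ] ℂ) :=
    { toFun := fun x => N.liftQ (B x) (hker x)
      map_add' := fun a b => by
        refine LinearMap.ext fun u => ?_
        obtain ⟨y, rfl⟩ := Submodule.Quotient.mk_surjective N u
        simp
      map_smul' := fun c a => by
        refine LinearMap.ext fun u => ?_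
        obtain ⟨y, rfl⟩ := Submodule.Quotient.mk_surjective N u
        simp } with hfdef
  have hfker : N ≤ LinearMap.ker f := by
    intro x hx
    refine LinearMap.ext fun u => ?_
    obtain ⟨y, rfl⟩ := Submodule.Quotient.mk_surjective N u
    have : B y x = 0 := hx y
    have hxy : B x y = 0 := by
      have h2 := hherm x y
      rw [this] at h2
      simpa using h2.symm
    simp [hfdef, hxy]
  set B' : (V ⧸ N) →ₗ⋆[ℂ] (V ⧸ N) →ₗ[ℂ] ℂ := N.liftQ f hfker with hB'def
  have hB'mk : ∀ x y : V, B' (Submodule.Quotient.mk x) (Submodule.Quotient.mk y) = B x y := by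
    intro x y; simp [hB'def, hfdef]
  -- descend T
  have hTN : N ≤ N.comap T := by
    intro x hx y
    rw [← hsym y x]
    exact hx (T y)
  set T' : (V ⧸ N) →ₗ[ℂ] (V ⧸ N) := N.mapQ N T hTN with hT'def
  have hT'mk : ∀ x : V, T' (Submodule.Quotient.mk x) = Submodule.Quotient.mk (T x) := by
    intro x; simp [hT'def]
  refine ⟨B', hB'mk, ?_, ?_, ?_, T', hT'mk, ?_, ?_, ?_⟩
  · intro u v
    obtain ⟨x, rfl⟩ := Submodule.Quotient.mk_surjective N u
    obtain ⟨y, rfl⟩ := Submodule.Quotient.mk_surjective N v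
    rw [hB'mk, hB'mk, hherm]
  · intro u
    obtain ⟨x, rfl⟩ := Submodule.Quotient.mk_surjective N u
    rw [hB'mk]; exact hpos x
  · intro u hu
    obtain ⟨x, rfl⟩ := Submodule.Quotient.mk_surjective N u
    rw [hB'mk] at hu
    rw [Submodule.Quotient.mk_eq_zero]
    exact (memN' x).mpr hu
  · intro u v
    obtain ⟨x, rfl⟩ := Submodule.Quotient.mk_surjective N u
    obtain ⟨y, rfl⟩ := Submodule.Quotient.mk_surjective N v
    rw [hT'mk, hT'mk, hB'mk, hB'mk]
    exact hsym x y
  · intro u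
    obtain ⟨x, rfl⟩ := Submodule.Quotient.mk_surjective N u
    rw [hT'mk, hB'mk]
    exact hTpos x
  · intro u
    obtain ⟨x, rfl⟩ := Submodule.Quotient.mk_surjective N u
    rw [hT'mk, hB'mk, hB'mk]
    exact hcontr x
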